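/- For every finite group G, there exists a finite graph (V; E) such that G is isomorphic to the automorphism group Aut(V; E). -/

import Mathlib

universe u
namespace Frucht

variable {G : Type u} [Group G] (n : ℕ) (col : G → ℕ)

/-- Vertex type: group vertices, path vertices (arc × position), leaf vertices (arc × which). -/
abbrev Vtx (G : Type u) (n : ℕ) : Type u := G ⊕ ((G × G) × (Fin (n + 6) ⊕ Fin 3))

variable (G) in
def vG (x : G) : Vtx G n := Sum.inl x
def vP (a : G × G) (i : Fin (n + 6)) : Vtx G n := Sum.inr (a, Sum.inl i)
def vL (a : G × G) (k : Fin 3) : Vtx G n := Sum.inr (a, Sum.inr k)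

/-- leaf position: leaf 0 at path pos 1, leaf 1 at pos 2, leaf 2 at pos `col (a.1⁻¹*a.2)`. -/
def lpos (a : G × G) (k : Fin 3) : ℕ :=
  if k = 0 then 1 else if k = 1 then 2 else col (a.1⁻¹ * a.2)

def adj : Vtx G n → Vtx G n → Prop
  | Sum.inl x, Sum.inr (a, Sum.inl i) => (x = a.1 ∧ (i : ℕ) = 0) ∨ (x = a.2 ∧ (i : ℕ) = n + 5)
  | Sum.inr (a, Sum.inl i), Sum.inl x => (x = a.1 ∧ (i : ℕ) = 0) ∨ (x = a.2 ∧ (i : ℕ) = n + 5)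
  | Sum.inr (a, Sum.inl i), Sum.inr (b, Sum.inl j) =>
      a = b ∧ ((i : ℕ) + 1 = j ∨ (j : ℕ) + 1 = i)
  | Sum.inr (a, Sum.inl i), Sum.inr (b, Sum.inr k) => a = b ∧ (i : ℕ) = lpos col a k
  | Sum.inr (a, Sum.inr k), Sum.inr (b, Sum.inl i) => a = b ∧ (i : ℕ) = lpos col b k
  | _, _ => False

def Γ : SimpleGraph (Vtx G n) where
  Adj := adj n col
  symm := ⟨by
    rintro (x | ⟨a, i | k⟩) (y | ⟨b, j | l⟩) h <;> simp only [adj] at h ⊢ <;> tauto⟩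
  loopless := ⟨by
    rintro (x | ⟨a, i | k⟩) h <;> simp only [adj] at h <;> omega⟩

variable {n col}

lemma vP_inj {a b : G × G} {i j : Fin (n+6)} (h : vP n a i = vP n b j) : a = b ∧ i = j := by
  simpa [vP] using h

lemma vG_ne_vP {x : G} {a : G × G} {i : Fin (n+6)} : vG G n x ≠ vP n a i := by simp [vG, vP]
lemma vG_ne_vL {x : G} {a : G × G} {k : Fin 3} : vG G n x ≠ vL n a k := by simp [vG, vL]
lemma vP_ne_vL {a b : G × G} {i : Fin (n+6)} {k : Fin 3} : vP n a i ≠ vL n b k := by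
  simp [vP, vL]
lemma vG_inj {x y : G} (h : vG G n x = vG G n y) : x = y := by simpa [vG] using h
lemma vL_inj {a b : G × G} {k l : Fin 3} (h : vL n a k = vL n b l) : a = b ∧ k = l := by
  simpa [vL] using h

lemma adj_vG_vP {x : G} {a : G × G} {i : Fin (n+6)} :
    (Γ n col).Adj (vG G n x) (vP n a i) ↔
      (x = a.1 ∧ (i : ℕ) = 0) ∨ (x = a.2 ∧ (i : ℕ) = n + 5) := Iff.rfl

lemma adj_vP_vP {a b : G × G} {i j : Fin (n+6)} :
    (Γ n col).Adj (vP n a i) (vP n b j) ↔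
      a = b ∧ ((i : ℕ) + 1 = j ∨ (j : ℕ) + 1 = i) := Iff.rfl

lemma adj_vP_vL {a b : G × G} {i : Fin (n+6)} {k : Fin 3} :
    (Γ n col).Adj (vP n a i) (vL n b k) ↔ a = b ∧ (i : ℕ) = lpos col a k := Iff.rfl

lemma adj_vP_vG {x : G} {a : G × G} {i : Fin (n+6)} :
    (Γ n col).Adj (vP n a i) (vG G n x) ↔
      (x = a.1 ∧ (i : ℕ) = 0) ∨ (x = a.2 ∧ (i : ℕ) = n + 5) := Iff.rfl

lemma adj_vL_vP {a b : G × G} {i : Fin (n+6)} {k : Fin 3} :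
    (Γ n col).Adj (vL n a k) (vP n b i) ↔ a = b ∧ (i : ℕ) = lpos col b k := Iff.rfl

lemma not_adj_vG_vG {x y : G} : ¬ (Γ n col).Adj (vG G n x) (vG G n y) := id
lemma not_adj_vG_vL {x : G} {a : G × G} {k : Fin 3} : ¬ (Γ n col).Adj (vG G n x) (vL n a k) := id
lemma not_adj_vL_vG {x : G} {a : G × G} {k : Fin 3} : ¬ (Γ n col).Adj (vL n a k) (vG G n x) := id
lemma not_adj_vL_vL {a b : G × G} {k l : Fin 3} : ¬ (Γ n col).Adj (vL n a k) (vL n b l) := id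

/-- Every vertex is of one of the three shapes. -/
lemma vtx_cases (u : Vtx G n) :
    (∃ x, u = vG G n x) ∨ (∃ a i, u = vP n a i) ∨ (∃ a k, u = vL n a k) := by
  rcases u with x | ⟨a, i | k⟩
  · exact Or.inl ⟨x, rfl⟩
  · exact Or.inr (Or.inl ⟨a, i, rfl⟩)
  · exact Or.inr (Or.inr ⟨a, k, rfl⟩)

lemma adj_vG_iff {x : G} {u : Vtx G n} (h : (Γ n col).Adj (vG G n x) u) :
    ∃ (p : G × G) (i : Fin (n+6)), u = vP n p i ∧
      ((p.1 = x ∧ (i : ℕ) = 0) ∨ (p.2 = x ∧ (i : ℕ) = n + 5)) := by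
  rcases vtx_cases u with ⟨y, rfl⟩ | ⟨a, i, rfl⟩ | ⟨a, k, rfl⟩
  · exact absurd h not_adj_vG_vG
  · rcases adj_vG_vP.1 h with ⟨h1, h2⟩ | ⟨h1, h2⟩
    · exact ⟨a, i, rfl, Or.inl ⟨h1.symm, h2⟩⟩
    · exact ⟨a, i, rfl, Or.inr ⟨h1.symm, h2⟩⟩
  · exact absurd h not_adj_vG_vL

lemma adj_vP_iff {a : G × G} {i : Fin (n+6)} {u : Vtx G n} (h : (Γ n col).Adj (vP n a i) u) :
    (∃ j : Fin (n+6), u = vP n a j ∧ ((j : ℕ) + 1 = i ∨ (i : ℕ) + 1 = j)) ∨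
    (u = vG G n a.1 ∧ (i : ℕ) = 0) ∨ (u = vG G n a.2 ∧ (i : ℕ) = n + 5) ∨
    (u = vL n a 0 ∧ (i : ℕ) = 1) ∨ (u = vL n a 1 ∧ (i : ℕ) = 2) ∨
    (u = vL n a 2 ∧ (i : ℕ) = col (a.1⁻¹ * a.2)) := by
  rcases vtx_cases u with ⟨y, rfl⟩ | ⟨b, j, rfl⟩ | ⟨b, k, rfl⟩
  · rcases adj_vP_vG.1 h with ⟨h1, h2⟩ | ⟨h1, h2⟩
    · exact Or.inr (Or.inl ⟨by rw [h1], h2⟩)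
    · exact Or.inr (Or.inr (Or.inl ⟨by rw [h1], h2⟩))
  · obtain ⟨rfl, h2⟩ := adj_vP_vP.1 h
    exact Or.inl ⟨j, rfl, by omega⟩
  · obtain ⟨rfl, h2⟩ := adj_vP_vL.1 h
    fin_cases k <;> simp [lpos] at h2 ⊢ <;> tauto

set_option linter.unusedSectionVars false

variable (col) in
/-- `u` has at least 4 pairwise distinct neighbours. -/
def IsBig (u : Vtx G n) : Prop :=
  ∃ v1 v2 v3 v4 : Vtx G n, v1 ≠ v2 ∧ v1 ≠ v3 ∧ v1 ≠ v4 ∧ v2 ≠ v3 ∧ v2 ≠ v4 ∧ v3 ≠ v4 ∧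
    (Γ n col).Adj u v1 ∧ (Γ n col).Adj u v2 ∧ (Γ n col).Adj u v3 ∧ (Γ n col).Adj u v4

variable (col) in
/-- `u` has at most one neighbour. -/
def Uniq (u : Vtx G n) : Prop :=
  ∀ v w : Vtx G n, (Γ n col).Adj u v → (Γ n col).Adj u w → v = w

variable (φ : Γ n col ≃g Γ n col)

lemma isBig_map {u : Vtx G n} (h : IsBig col u) : IsBig col (φ u) := by
  obtain ⟨v1, v2, v3, v4, d12, d13, d14, d23, d24, d34, a1, a2, a3, a4⟩ := h
  exact ⟨φ v1, φ v2, φ v3, φ v4,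
    fun e => d12 (φ.injective e), fun e => d13 (φ.injective e), fun e => d14 (φ.injective e),
    fun e => d23 (φ.injective e), fun e => d24 (φ.injective e), fun e => d34 (φ.injective e),
    φ.map_adj_iff.2 a1, φ.map_adj_iff.2 a2, φ.map_adj_iff.2 a3, φ.map_adj_iff.2 a4⟩

lemma isBig_map_iff {u : Vtx G n} : IsBig col (φ u) ↔ IsBig col u := by
  refine ⟨fun h => ?_, isBig_map φ⟩
  have := isBig_map φ.symm h
  simpa using this

lemma uniq_map {u : Vtx G n} (h : Uniq col u) : Uniq col (φ u) := by
  intro v w hv hw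
  have hv' : (Γ n col).Adj u (φ.symm v) := by
    have := φ.symm.map_adj_iff.2 hv; simpa using this
  have hw' : (Γ n col).Adj u (φ.symm w) := by
    have := φ.symm.map_adj_iff.2 hw; simpa using this
  have := h _ _ hv' hw'
  exact φ.symm.injective (by simpa using this)

lemma uniq_map_iff {u : Vtx G n} : Uniq col (φ u) ↔ Uniq col u := by
  refine ⟨fun h => ?_, uniq_map φ⟩
  have := uniq_map φ.symm h
  simpa using this

lemma isBig_vG [Nontrivial G] (x : G) : IsBig col (vG G n x) := by
  obtain ⟨h0, h1, hne⟩ := exists_pair_ne G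
  have pos : ∀ a b : G × G, ∀ h h', vP n a ⟨0, h⟩ ≠ vP n b ⟨n+5, h'⟩ := by
    intro a b h h' e
    have h3 : (0 : ℕ) = n + 5 := congrArg Fin.val (vP_inj e).2
    omega
  refine ⟨vP n (x, h0) ⟨0, by omega⟩, vP n (x, h1) ⟨0, by omega⟩,
    vP n (h0, x) ⟨n+5, by omega⟩, vP n (h1, x) ⟨n+5, by omega⟩,
    fun e => hne (congrArg Prod.snd (vP_inj e).1), pos _ _ _ _, pos _ _ _ _,
    pos _ _ _ _, pos _ _ _ _, fun e => hne (congrArg Prod.fst (vP_inj e).1),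
    Or.inl ⟨rfl, rfl⟩, Or.inl ⟨rfl, rfl⟩, Or.inr ⟨rfl, rfl⟩, Or.inr ⟨rfl, rfl⟩⟩

lemma not_isBig_vP (hlb : ∀ g : G, 4 ≤ col g) (hub : ∀ g : G, col g ≤ n + 3)
    (a : G × G) (i : Fin (n+6)) : ¬ IsBig col (vP n a i) := by
  rintro ⟨v1, v2, v3, v4, d12, d13, d14, d23, d24, d34, a1, a2, a3, a4⟩
  have key : ∀ v, (Γ n col).Adj (vP n a i) v →
      (∃ j : Fin (n+6), v = vP n a j ∧ ((j : ℕ) + 1 = i ∨ (i : ℕ) + 1 = j)) ∨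
      v = (if (i : ℕ) = 0 then vG G n a.1 else if (i : ℕ) = n + 5 then vG G n a.2
           else if (i : ℕ) = 1 then vL n a 0 else if (i : ℕ) = 2 then vL n a 1
           else vL n a 2) := by
    intro v hv
    have h4 := hlb (a.1⁻¹ * a.2)
    have hu := hub (a.1⁻¹ * a.2)
    rcases adj_vP_iff hv with h | ⟨rfl, hc⟩ | ⟨rfl, hc⟩ | ⟨rfl, hc⟩ | ⟨rfl, hc⟩ | ⟨rfl, hc⟩
    · exact Or.inl h
    all_goals right
    · simp [hc]
    · rw [if_neg (by omega), if_pos hc]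
    · rw [if_neg (by omega), if_neg (by omega), if_pos hc]
    · rw [if_neg (by omega), if_neg (by omega), if_neg (by omega), if_pos hc]
    · rw [if_neg (by omega), if_neg (by omega), if_neg (by omega), if_neg (by omega)]
  have k1 := key v1 a1
  have k2 := key v2 a2
  have k3 := key v3 a3
  have k4 := key v4 a4
  have path3 : ∃ j1 j2 j3 : Fin (n+6), j1 ≠ j2 ∧ j1 ≠ j3 ∧ j2 ≠ j3 ∧
      ((j1 : ℕ) + 1 = i ∨ (i : ℕ) + 1 = j1) ∧ ((j2 : ℕ) + 1 = i ∨ (i : ℕ) + 1 = j2) ∧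
      ((j3 : ℕ) + 1 = i ∨ (i : ℕ) + 1 = j3) := by
    rcases k1 with ⟨j1, rfl, hj1⟩ | e1 <;> rcases k2 with ⟨j2, rfl, hj2⟩ | e2 <;>
      rcases k3 with ⟨j3, rfl, hj3⟩ | e3 <;> rcases k4 with ⟨j4, rfl, hj4⟩ | e4
    all_goals first
      | (exact absurd (e1.trans e2.symm) d12) | (exact absurd (e1.trans e3.symm) d13)
      | (exact absurd (e1.trans e4.symm) d14) | (exact absurd (e2.trans e3.symm) d23)
      | (exact absurd (e2.trans e4.symm) d24) | (exact absurd (e3.trans e4.symm) d34)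
      | (exact ⟨j1, j2, j3, fun e => d12 (by rw [e]), fun e => d13 (by rw [e]),
          fun e => d23 (by rw [e]), hj1, hj2, hj3⟩)
      | (exact ⟨j1, j2, j4, fun e => d12 (by rw [e]), fun e => d14 (by rw [e]),
          fun e => d24 (by rw [e]), hj1, hj2, hj4⟩)
      | (exact ⟨j1, j3, j4, fun e => d13 (by rw [e]), fun e => d14 (by rw [e]),
          fun e => d34 (by rw [e]), hj1, hj3, hj4⟩)
      | (exact ⟨j2, j3, j4, fun e => d23 (by rw [e]), fun e => d24 (by rw [e]),
          fun e => d34 (by rw [e]), hj2, hj3, hj4⟩)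
  obtain ⟨j1, j2, j3, e12, e13, e23, h1, h2, h3⟩ := path3
  have : (j1 : ℕ) ≠ j2 := fun e => e12 (Fin.ext e)
  have : (j1 : ℕ) ≠ j3 := fun e => e13 (Fin.ext e)
  have : (j2 : ℕ) ≠ j3 := fun e => e23 (Fin.ext e)
  omega

lemma not_isBig_vL (a : G × G) (k : Fin 3) : ¬ IsBig col (vL n a k) := by
  rintro ⟨v1, v2, v3, v4, d12, d13, d14, d23, d24, d34, a1, a2, a3, a4⟩
  have key : ∀ v, (Γ n col).Adj (vL n a k) v → ∃ i : Fin (n+6), v = vP n a i ∧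
      (i : ℕ) = lpos col a k := by
    intro v hv
    rcases vtx_cases v with ⟨y, rfl⟩ | ⟨b, i, rfl⟩ | ⟨b, l, rfl⟩
    · exact absurd hv not_adj_vL_vG
    · obtain ⟨rfl, h⟩ := adj_vL_vP.1 hv; exact ⟨i, rfl, h⟩
    · exact absurd hv not_adj_vL_vL
  obtain ⟨i1, rfl, e1⟩ := key v1 a1
  obtain ⟨i2, rfl, e2⟩ := key v2 a2
  have : i1 = i2 := Fin.ext (by omega)
  exact d12 (by rw [this])

lemma uniq_vL (a : G × G) (k : Fin 3) : Uniq col (vL n a k) := by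
  intro v w hv hw
  rcases vtx_cases v with ⟨y, rfl⟩ | ⟨b, i, rfl⟩ | ⟨b, l, rfl⟩
  · exact absurd hv not_adj_vL_vG
  · rcases vtx_cases w with ⟨y, rfl⟩ | ⟨c, j, rfl⟩ | ⟨c, l, rfl⟩
    · exact absurd hw not_adj_vL_vG
    · obtain ⟨rfl, h1⟩ := adj_vL_vP.1 hv
      obtain ⟨rfl, h2⟩ := adj_vL_vP.1 hw
      have : i = j := Fin.ext (by omega)
      rw [this]
    · exact absurd hw not_adj_vL_vL
  · exact absurd hv not_adj_vL_vL

lemma not_uniq_vP (a : G × G) (i : Fin (n+6)) : ¬ Uniq col (vP n a i) := by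
  intro h
  by_cases h0 : (i : ℕ) = 0
  · have a1 : (Γ n col).Adj (vP n a i) (vG G n a.1) := Or.inl ⟨rfl, h0⟩
    have a2 : (Γ n col).Adj (vP n a i) (vP n a ⟨1, by omega⟩) :=
      ⟨rfl, Or.inl (by simp only [Fin.val_mk]; omega)⟩
    exact vG_ne_vP (h _ _ a1 a2)
  by_cases h5 : (i : ℕ) = n + 5
  · have a1 : (Γ n col).Adj (vP n a i) (vG G n a.2) := Or.inr ⟨rfl, h5⟩
    have a2 : (Γ n col).Adj (vP n a i) (vP n a ⟨n+4, by omega⟩) :=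
      ⟨rfl, Or.inr (by simp only [Fin.val_mk]; omega)⟩
    exact vG_ne_vP (h _ _ a1 a2)
  · have hi : (i : ℕ) < n + 6 := i.isLt
    have a1 : (Γ n col).Adj (vP n a i) (vP n a ⟨(i : ℕ) - 1, by omega⟩) :=
      ⟨rfl, Or.inr (by simp only [Fin.val_mk]; omega)⟩
    have a2 : (Γ n col).Adj (vP n a i) (vP n a ⟨(i : ℕ) + 1, by omega⟩) :=
      ⟨rfl, Or.inl (by simp only [Fin.val_mk])⟩
    have := (vP_inj (h _ _ a1 a2)).2
    simp only [Fin.mk.injEq] at this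
    omega

lemma lpos0 {a : G × G} : lpos col a 0 = 1 := rfl
lemma lpos1 {a : G × G} : lpos col a 1 = 2 := rfl
lemma lpos2 {a : G × G} : lpos col a 2 = col (a.1⁻¹ * a.2) := rfl

lemma track [Nontrivial G] (hlb : ∀ g : G, 4 ≤ col g) (hub : ∀ g : G, col g ≤ n + 3)
    (φ : Γ n col ≃g Γ n col) (a : G × G) :
    ∃ b : G × G, (∀ i : Fin (n+6), φ (vP n a i) = vP n b i) ∧
      (∀ k : Fin 3, φ (vL n a k) = vL n b k) ∧
      φ (vG G n a.1) = vG G n b.1 ∧ φ (vG G n a.2) = vG G n b.2 ∧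
      col (b.1⁻¹ * b.2) = col (a.1⁻¹ * a.2) := by
  have nbP := not_isBig_vP hlb hub
  have bigG : ∀ x : G, IsBig col (vG G n x) := isBig_vG
  have imgP_ne_vG : ∀ (p : G × G) (j : Fin (n+6)) (y : G), φ (vP n p j) ≠ vG G n y := by
    intro p j y e
    exact nbP p j ((isBig_map_iff φ).1 (by rw [e]; exact bigG y))
  have imgP_ne_vL : ∀ (p q : G × G) (j : Fin (n+6)) (k : Fin 3), φ (vP n p j) ≠ vL n q k := by
    intro p q j k e
    exact not_uniq_vP p j ((uniq_map_iff φ).1 (by rw [e]; exact uniq_vL q k))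
  have imgL_ne_vP : ∀ (p q : G × G) (k : Fin 3) (j : Fin (n+6)), φ (vL n p k) ≠ vP n q j := by
    intro p q k j e
    exact not_uniq_vP q j (by rw [← e]; exact uniq_map φ (uniq_vL p k))
  -- the image of a group vertex is a group vertex
  have psi : ∀ x : G, ∃ y : G, φ (vG G n x) = vG G n y := by
    intro x
    rcases vtx_cases (φ (vG G n x)) with ⟨y, hy⟩ | ⟨p, j, hp⟩ | ⟨p, k, hk⟩
    · exact ⟨y, hy⟩
    · exact absurd ((isBig_map_iff φ).2 (bigG x)) (by rw [hp]; exact nbP p j)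
    · exact absurd ((isBig_map_iff φ).2 (bigG x)) (by rw [hk]; exact not_isBig_vL p k)
  obtain ⟨y1, hy1⟩ := psi a.1
  obtain ⟨y2, hy2⟩ := psi a.2
  -- locate the image of position 0
  have adj0 : (Γ n col).Adj (vG G n a.1) (vP n a ⟨0, by omega⟩) := Or.inl ⟨rfl, rfl⟩
  have hadj0 : (Γ n col).Adj (vG G n y1) (φ (vP n a ⟨0, by omega⟩)) := by
    rw [← hy1]; exact φ.map_adj_iff.2 adj0
  obtain ⟨b, i0, hval, hcase⟩ := adj_vG_iff hadj0
  rcases hcase with ⟨hb1, hi0⟩ | ⟨hb2, hi0⟩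
  · -- forward orientation
    have step01 : φ (vP n a ⟨0, by omega⟩) = vP n b ⟨0, by omega⟩ := by
      rw [hval]; congr 1; exact Fin.ext hi0
    have step1 : φ (vP n a ⟨1, by omega⟩) = vP n b ⟨1, by omega⟩ := by
      have h01 : (Γ n col).Adj (vP n a ⟨0, by omega⟩) (vP n a ⟨1, by omega⟩) :=
        ⟨rfl, Or.inl rfl⟩
      have himg : (Γ n col).Adj (vP n b ⟨0, by omega⟩) (φ (vP n a ⟨1, by omega⟩)) := by
        rw [← step01]; exact φ.map_adj_iff.2 h01
      rcases adj_vP_iff himg with ⟨j, hj, hcond⟩ | ⟨h, hc⟩ | ⟨h, hc⟩ | ⟨h, hc⟩ | ⟨h, hc⟩ | ⟨h, hc⟩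
      · simp only [Fin.val_mk] at hcond
        rw [hj]; congr 1; exact Fin.ext (by simp only [Fin.val_mk]; omega)
      · exact absurd h (imgP_ne_vG _ _ _)
      · simp only [Fin.val_mk] at hc; omega
      · exact absurd h (imgP_ne_vL _ _ _ _)
      · exact absurd h (imgP_ne_vL _ _ _ _)
      · exact absurd h (imgP_ne_vL _ _ _ _)
    have step : ∀ i : ℕ, ∀ h2 : i + 2 < n + 6,
        φ (vP n a ⟨i, by omega⟩) = vP n b ⟨i, by omega⟩ →
        φ (vP n a ⟨i+1, by omega⟩) = vP n b ⟨i+1, by omega⟩ →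
        φ (vP n a ⟨i+2, h2⟩) = vP n b ⟨i+2, h2⟩ := by
      intro i h2 hi hi1
      have h12 : (Γ n col).Adj (vP n a ⟨i+1, by omega⟩) (vP n a ⟨i+2, h2⟩) :=
        ⟨rfl, Or.inl rfl⟩
      have himg : (Γ n col).Adj (vP n b ⟨i+1, by omega⟩) (φ (vP n a ⟨i+2, h2⟩)) := by
        rw [← hi1]; exact φ.map_adj_iff.2 h12
      rcases adj_vP_iff himg with ⟨j, hj, hcond⟩ | ⟨h, hc⟩ | ⟨h, hc⟩ | ⟨h, hc⟩ | ⟨h, hc⟩ | ⟨h, hc⟩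
      · simp only [Fin.val_mk] at hcond
        rcases hcond with hcond | hcond
        · -- j = i, contradiction with injectivity
          exfalso
          have : φ (vP n a ⟨i+2, h2⟩) = φ (vP n a ⟨i, by omega⟩) := by
            rw [hj, hi]; congr 1; exact Fin.ext (by simp only [Fin.val_mk]; omega)
          have := φ.injective this
          have := (vP_inj this).2
          have : (i + 2 : ℕ) = i := congrArg Fin.val this
          omega
        · rw [hj]; congr 1; exact Fin.ext (by simp only [Fin.val_mk]; omega)
      · exact absurd h (imgP_ne_vG _ _ _)
      · exact absurd h (imgP_ne_vG _ _ _)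
      · exact absurd h (imgP_ne_vL _ _ _ _)
      · exact absurd h (imgP_ne_vL _ _ _ _)
      · exact absurd h (imgP_ne_vL _ _ _ _)
    have H : ∀ i : ℕ, ∀ h : i < n + 6, φ (vP n a ⟨i, h⟩) = vP n b ⟨i, h⟩ := by
      intro i
      induction i using Nat.strong_induction_on with
      | _ i ih =>
        intro h
        match i, h with
        | 0, h => exact step01
        | 1, h => exact step1
        | (k+2), h => exact step k h (ih k (by omega) (by omega)) (ih (k+1) (by omega) (by omega))
    have Hfin : ∀ i : Fin (n+6), φ (vP n a i) = vP n b i := by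
      intro i
      have := H i.val i.isLt
      simpa using this
    -- endpoints
    have hb1' : φ (vG G n a.1) = vG G n b.1 := by rw [hy1, hb1]
    have hb2' : φ (vG G n a.2) = vG G n b.2 := by
      have adjn5 : (Γ n col).Adj (vG G n a.2) (vP n a ⟨n+5, by omega⟩) := Or.inr ⟨rfl, rfl⟩
      have himg : (Γ n col).Adj (vG G n y2) (vP n b ⟨n+5, by omega⟩) := by
        rw [← hy2, ← Hfin ⟨n+5, by omega⟩]; exact φ.map_adj_iff.2 adjn5
      obtain ⟨p, i', heq, hcc⟩ := adj_vG_iff himg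
      obtain ⟨rfl, rfl⟩ : p = b ∧ i' = ⟨n+5, by omega⟩ := ⟨(vP_inj heq).1.symm, (vP_inj heq).2.symm⟩
      rcases hcc with ⟨h1, h2⟩ | ⟨h1, h2⟩
      · simp only [Fin.val_mk] at h2; omega
      · rw [hy2, h1]
    -- leaves
    have leafgen : ∀ (k : Fin 3) (hp : lpos col a k < n + 6),
        (Γ n col).Adj (vP n b ⟨lpos col a k, hp⟩) (φ (vL n a k)) := by
      intro k hp
      have hadj : (Γ n col).Adj (vL n a k) (vP n a ⟨lpos col a k, hp⟩) := ⟨rfl, rfl⟩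
      have := φ.map_adj_iff.2 hadj
      rw [Hfin] at this
      exact this.symm
    have leaf0 : φ (vL n a 0) = vL n b 0 := by
      have himg := leafgen 0 (by rw [lpos0]; omega)
      rcases adj_vP_iff himg with ⟨j, hj, _⟩ | ⟨h, hc⟩ | ⟨h, hc⟩ | ⟨h, hc⟩ | ⟨h, hc⟩ | ⟨h, hc⟩
      · exact absurd hj (imgL_ne_vP _ _ _ _)
      · simp only [Fin.val_mk, lpos0] at hc; omega
      · simp only [Fin.val_mk, lpos0] at hc; omega
      · exact h
      · simp only [Fin.val_mk, lpos0] at hc; omega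
      · simp only [Fin.val_mk, lpos0] at hc; have := hlb (b.1⁻¹ * b.2); omega
    have leaf1 : φ (vL n a 1) = vL n b 1 := by
      have himg := leafgen 1 (by rw [lpos1]; omega)
      rcases adj_vP_iff himg with ⟨j, hj, _⟩ | ⟨h, hc⟩ | ⟨h, hc⟩ | ⟨h, hc⟩ | ⟨h, hc⟩ | ⟨h, hc⟩
      · exact absurd hj (imgL_ne_vP _ _ _ _)
      · simp only [Fin.val_mk, lpos1] at hc; omega
      · simp only [Fin.val_mk, lpos1] at hc; omega
      · simp only [Fin.val_mk, lpos1] at hc; omega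
      · exact h
      · simp only [Fin.val_mk, lpos1] at hc; have := hlb (b.1⁻¹ * b.2); omega
    have leaf2 : φ (vL n a 2) = vL n b 2 ∧ col (b.1⁻¹ * b.2) = col (a.1⁻¹ * a.2) := by
      have hca := hlb (a.1⁻¹ * a.2)
      have hcu := hub (a.1⁻¹ * a.2)
      have himg := leafgen 2 (by rw [lpos2]; omega)
      rcases adj_vP_iff himg with ⟨j, hj, _⟩ | ⟨h, hc⟩ | ⟨h, hc⟩ | ⟨h, hc⟩ | ⟨h, hc⟩ | ⟨h, hc⟩
      · exact absurd hj (imgL_ne_vP _ _ _ _)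
      · simp only [Fin.val_mk, lpos2] at hc; omega
      · simp only [Fin.val_mk, lpos2] at hc; omega
      · simp only [Fin.val_mk, lpos2] at hc; omega
      · simp only [Fin.val_mk, lpos2] at hc; omega
      · simp only [Fin.val_mk, lpos2] at hc; exact ⟨h, hc.symm⟩
    refine ⟨b, Hfin, ?_, hb1', hb2', leaf2.2⟩
    intro k
    fin_cases k
    · exact leaf0
    · exact leaf1
    · exact leaf2.1
  · -- reversed orientation: impossible
    exfalso
    have step0 : φ (vP n a ⟨0, by omega⟩) = vP n b ⟨n+5, by omega⟩ := by
      rw [hval]; congr 1; exact Fin.ext hi0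
    have step1r : φ (vP n a ⟨1, by omega⟩) = vP n b ⟨n+4, by omega⟩ := by
      have h01 : (Γ n col).Adj (vP n a ⟨0, by omega⟩) (vP n a ⟨1, by omega⟩) :=
        ⟨rfl, Or.inl rfl⟩
      have himg : (Γ n col).Adj (vP n b ⟨n+5, by omega⟩) (φ (vP n a ⟨1, by omega⟩)) := by
        rw [← step0]; exact φ.map_adj_iff.2 h01
      rcases adj_vP_iff himg with ⟨j, hj, hcond⟩ | ⟨h, hc⟩ | ⟨h, hc⟩ | ⟨h, hc⟩ | ⟨h, hc⟩ | ⟨h, hc⟩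
      · simp only [Fin.val_mk] at hcond
        have hjlt : (j : ℕ) < n + 6 := j.isLt
        rw [hj]; congr 1; exact Fin.ext (by simp only [Fin.val_mk]; omega)
      · simp only [Fin.val_mk] at hc; omega
      · exact absurd h (imgP_ne_vG _ _ _)
      · simp only [Fin.val_mk] at hc; omega
      · simp only [Fin.val_mk] at hc; omega
      · simp only [Fin.val_mk] at hc; have := hub (b.1⁻¹ * b.2); omega
    have hadj : (Γ n col).Adj (vL n a 0) (vP n a ⟨1, by omega⟩) := ⟨rfl, rfl⟩
    have himg : (Γ n col).Adj (vP n b ⟨n+4, by omega⟩) (φ (vL n a 0)) := by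
      have := φ.map_adj_iff.2 hadj
      rw [step1r] at this
      exact this.symm
    rcases adj_vP_iff himg with ⟨j, hj, _⟩ | ⟨h, hc⟩ | ⟨h, hc⟩ | ⟨h, hc⟩ | ⟨h, hc⟩ | ⟨h, hc⟩
    · exact absurd hj (imgL_ne_vP _ _ _ _)
    · simp only [Fin.val_mk] at hc; omega
    · simp only [Fin.val_mk] at hc; omega
    · simp only [Fin.val_mk] at hc; omega
    · simp only [Fin.val_mk] at hc; omega
    · simp only [Fin.val_mk] at hc; have := hub (b.1⁻¹ * b.2); omega

def actF (t : G) : Vtx G n → Vtx G n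
  | Sum.inl x => Sum.inl (t * x)
  | Sum.inr (a, w) => Sum.inr ((t * a.1, t * a.2), w)

@[simp] lemma actF_inl (t x : G) : actF (n := n) t (Sum.inl x) = Sum.inl (t * x) := rfl
@[simp] lemma actF_inr (t : G) (a : G × G) (w : Fin (n+6) ⊕ Fin 3) :
    actF t (Sum.inr (a, w)) = Sum.inr ((t * a.1, t * a.2), w) := rfl

/-- Left multiplication action on the vertices. -/
def act (t : G) : Vtx G n ≃ Vtx G n where
  toFun := actF t
  invFun := actF t⁻¹
  left_inv := by rintro (x | ⟨⟨g, h⟩, w⟩) <;> simp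
  right_inv := by rintro (x | ⟨⟨g, h⟩, w⟩) <;> simp

lemma act_key (t g h : G) : (t * g)⁻¹ * (t * h) = g⁻¹ * h := by
  simp [mul_inv_rev, mul_assoc]

def θfun (n : ℕ) (col : G → ℕ) (t : G) : Γ n col ≃g Γ n col where
  toEquiv := act t
  map_rel_iff' := by
    rintro (x | ⟨⟨g, h⟩, i | k⟩) (y | ⟨⟨g', h'⟩, j | l⟩) <;>
      simp only [Γ, act, Equiv.coe_fn_mk, actF_inl, actF_inr, adj, lpos, act_key,
        Prod.mk.injEq, mul_right_inj] <;> tauto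

lemma θfun_apply_vG (t x : G) : θfun n col t (vG G n x) = vG G n (t * x) := rfl
lemma θfun_apply_vP (t : G) (a : G × G) (i : Fin (n+6)) :
    θfun n col t (vP n a i) = vP n (t * a.1, t * a.2) i := rfl
lemma θfun_apply_vL (t : G) (a : G × G) (k : Fin 3) :
    θfun n col t (vL n a k) = vL n (t * a.1, t * a.2) k := rfl

def θ (n : ℕ) (col : G → ℕ) : G →* (Γ n col ≃g Γ n col) :=
  MonoidHom.mk' (θfun n col) (by
    intro s t
    apply RelIso.ext
    rintro (x | ⟨⟨g, h⟩, w⟩)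
    · show Sum.inl (s * t * x) = Sum.inl (s * (t * x))
      rw [mul_assoc]
    · show Sum.inr ((s * t * g, s * t * h), w) = Sum.inr ((s * (t * g), s * (t * h)), w)
      rw [mul_assoc, mul_assoc])

lemma θ_injective : Function.Injective (θ (G := G) n col) := by
  intro s t h
  have h2 := congrArg (fun f => f (vG G n 1)) h
  simp only [θ, MonoidHom.mk'_apply, θfun_apply_vG] at h2
  have := vG_inj h2
  simpa using this

lemma θ_surjective [Nontrivial G] (hlb : ∀ g : G, 4 ≤ col g) (hub : ∀ g : G, col g ≤ n + 3)
    (hinj : Function.Injective col) : Function.Surjective (θ (G := G) n col) := by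
  intro φ
  obtain ⟨b0, _, _, hb01, _, _⟩ := track hlb hub φ (1, 1)
  set t := b0.1 with ht
  have hvG : ∀ x : G, φ (vG G n x) = vG G n (t * x) := by
    intro x
    obtain ⟨b, _, _, h1, h2, hcol⟩ := track hlb hub φ (1, x)
    have hb1 : b.1 = t := vG_inj (h1.symm.trans hb01)
    have hx : b.1⁻¹ * b.2 = (1 : G)⁻¹ * x := hinj hcol
    simp only [inv_one, one_mul] at hx
    rw [h2, ← hx, hb1]
    congr 1
    group
  refine ⟨t, ?_⟩
  apply RelIso.ext
  intro u
  rcases vtx_cases u with ⟨x, rfl⟩ | ⟨a, i, rfl⟩ | ⟨a, k, rfl⟩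
  · rw [show (θ n col t) (vG G n x) = vG G n (t * x) from rfl, ← hvG x]
  · obtain ⟨b, hP, hL, h1, h2, hcol⟩ := track hlb hub φ a
    have hb1 : b.1 = t * a.1 := vG_inj (h1.symm.trans (hvG a.1))
    have hb2 : b.2 = t * a.2 := vG_inj (h2.symm.trans (hvG a.2))
    rw [show (θ n col t) (vP n a i) = vP n (t * a.1, t * a.2) i from rfl, ← hb1, ← hb2,
      ← hP i]
  · obtain ⟨b, hP, hL, h1, h2, hcol⟩ := track hlb hub φ a
    have hb1 : b.1 = t * a.1 := vG_inj (h1.symm.trans (hvG a.1))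
    have hb2 : b.2 = t * a.2 := vG_inj (h2.symm.trans (hvG a.2))
    rw [show (θ n col t) (vL n a k) = vL n (t * a.1, t * a.2) k from rfl, ← hb1, ← hb2,
      ← hL k]

end Frucht

/-- **Frucht's theorem.** For every finite group `G`, there exists a finite graph
`(V; E)` (a nonempty finite vertex set with a simple graph structure) such that `G`
is isomorphic to the automorphism group of the graph. -/
theorem finite_group_is_finite_graph_automorphism_group (G : Type u) [Group G] [Finite G] :
    ∃ (V : Type u) (_ : Nonempty V) (_ : Finite V) (Γ : SimpleGraph V),
      Nonempty (G ≃* (Γ ≃g Γ)) := by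
  rcases subsingleton_or_nontrivial G with hs | hnt
  · refine ⟨G, ⟨1⟩, inferInstance, ⊥, ?_⟩
    haveI : Subsingleton ((⊥ : SimpleGraph G) ≃g (⊥ : SimpleGraph G)) :=
      ⟨fun f g => RelIso.ext fun x => Subsingleton.elim _ _⟩
    exact ⟨MulEquiv.ofBijective (1 : G →* ((⊥ : SimpleGraph G) ≃g (⊥ : SimpleGraph G)))
      ⟨fun a b _ => Subsingleton.elim a b, fun φ => ⟨1, Subsingleton.elim _ _⟩⟩⟩
  · haveI := Fintype.ofFinite G
    set n := Fintype.card G with hn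
    let e := Fintype.equivFin G
    let col : G → ℕ := fun g => (e g : ℕ) + 4
    have hlb : ∀ g, 4 ≤ col g := fun g => by simp [col]
    have hub : ∀ g, col g ≤ n + 3 := fun g => by
      have := (e g).isLt
      simp only [col]
      omega
    have hinj : Function.Injective col := fun a b h =>
      e.injective (Fin.ext (by simpa [col] using h))
    exact ⟨Frucht.Vtx G n, ⟨Frucht.vG G n 1⟩, inferInstance, Frucht.Γ n col,
      ⟨MulEquiv.ofBijective (Frucht.θ n col)
        ⟨Frucht.θ_injective, Frucht.θ_surjective hlb hub hinj⟩⟩⟩
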